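/- Let k be a positive integer and write ζ_m = e^{2πi/m}. Then the series g₃(ζ_{2k}, ζ_k) = ∑_{n=1}^{∞} ζ_k^{n(n−1)} / ( (ζ_{2k}; ζ_k)_n )² converges absolutely and equals (4/3) ∑_{j=1}^{k} ζ_k^{j(j−1)} / ( (ζ_{2k}; ζ_k)_j )². -/

import Mathlib

open Complex Filter Finset

/-- `e2pi r = e^{2 π i r}`; thus `ζ_k^h = e2pi (h/k)`. -/
noncomputable def e2pi (r : ℝ) : ℂ := Complex.exp (2 * Real.pi * Complex.I * r)

/-- The finite q-Pochhammer symbol `(a;q)_n = ∏_{j=0}^{n-1} (1 - a q^j)`. -/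
noncomputable def qPoch (a q : ℂ) (n : ℕ) : ℂ := ∏ j ∈ Finset.range n, (1 - a * q ^ j)

/-- The infinite q-Pochhammer symbol `(a;q)_∞ = ∏_{j=0}^{∞} (1 - a q^j)`. -/
noncomputable def qPochInf (a q : ℂ) : ℂ := ∏' j : ℕ, (1 - a * q ^ j)

/-- The Jacobi triple product `j(x,q) = (x;q)_∞ (q/x;q)_∞ (q;q)_∞`. -/
noncomputable def jac (x q : ℂ) : ℂ := qPochInf x q * qPochInf (q / x) q * qPochInf q q

/-- The universal mock theta function
`g₃(x,q) = ∑_{n≥1} q^{n(n-1)} / ((x;q)_n (q/x;q)_n)` (indexed here by `n+1`, `n : ℕ`). -/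
noncomputable def g₃ (x q : ℂ) : ℂ :=
  ∑' n : ℕ, q ^ (n * (n + 1)) / (qPoch x q (n + 1) * qPoch (q / x) q (n + 1))

/-- `qrad h k t = ζ_k^h e^{-t}`. -/
noncomputable def qrad (h k : ℕ) (t : ℝ) : ℂ := e2pi ((h : ℝ) / k) * Real.exp (-t)

/-- `srad h k B t = e^{π i h B / k} e^{-tB/2}`, a square root of `(qrad h k t)^B`. -/
noncomputable def srad (h k B : ℕ) (t : ℝ) : ℂ :=
  Complex.exp (Real.pi * Complex.I * ((h : ℝ) * B / k)) * Real.exp (-(t * B / 2))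

/-- The Appell–Lerch sum `m(X,q,z)`. -/
noncomputable def appellM (X q z : ℂ) : ℂ :=
  (1 / jac z q) * ∑' n : ℤ, (-z) ^ n * q ^ ((n * (n - 1)) / 2) / (1 - X * z * q ^ (n - 1))

lemma e2pi_pow (r : ℝ) (n : ℕ) : e2pi r ^ n = e2pi (n * r) := by
  rw [e2pi, e2pi, ← Complex.exp_nat_mul]
  congr 1
  push_cast
  ring

set_option maxHeartbeats 1000000 in
theorem stmt14 (k : ℕ) (hk : 0 < k) :
    (Summable fun n : ℕ =>
        ‖e2pi (1 / (k : ℝ)) ^ (n * (n + 1))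
          / (qPoch (e2pi (1 / (2 * (k : ℝ)))) (e2pi (1 / (k : ℝ))) (n + 1)) ^ 2‖) ∧
    g₃ (e2pi (1 / (2 * (k : ℝ)))) (e2pi (1 / (k : ℝ))) =
      (4 / 3) * ∑ j ∈ Finset.Icc 1 k,
        e2pi (1 / (k : ℝ)) ^ (j * (j - 1))
          / (qPoch (e2pi (1 / (2 * (k : ℝ)))) (e2pi (1 / (k : ℝ))) j) ^ 2 := by
  haveI : NeZero k := ⟨hk.ne'⟩
  have hk' : (k : ℝ) ≠ 0 := Nat.cast_ne_zero.mpr hk.ne'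
  set q : ℂ := e2pi (1 / (k : ℝ)) with hqdef
  set x : ℂ := e2pi (1 / (2 * (k : ℝ))) with hxdef
  have hx0 : x ≠ 0 := Complex.exp_ne_zero _
  have hx2 : x ^ 2 = q := by
    rw [hxdef, hqdef, e2pi_pow]
    congr 1
    field_simp
    norm_num
  have hqx : q / x = x := by
    rw [← hx2, sq, mul_div_assoc, div_self hx0, mul_one]
  have hqk : q ^ k = 1 := by
    rw [hqdef, e2pi_pow]
    have h1 : (k : ℝ) * (1 / k) = 1 := by field_simp
    rw [h1, e2pi]
    push_cast
    rw [mul_one]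
    exact Complex.exp_two_pi_mul_I
  have hxk : x ^ k = -1 := by
    rw [hxdef, e2pi_pow]
    have h1 : (k : ℝ) * (1 / (2 * k)) = 1 / 2 := by field_simp
    rw [h1, e2pi]
    rw [show (2 : ℂ) * (Real.pi : ℂ) * Complex.I * ((1 / 2 : ℝ) : ℂ)
        = (Real.pi : ℂ) * Complex.I by push_cast; ring]
    exact Complex.exp_pi_mul_I
  have hprim : IsPrimitiveRoot q k := by
    have h := Complex.isPrimitiveRoot_exp k hk.ne'
    have : q = Complex.exp (2 * Real.pi * Complex.I / k) := by
      rw [hqdef, e2pi]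
      congr 1
      push_cast
      ring
    rw [this]; exact h
  have hprod : ∀ a : ℂ, ∏ j ∈ Finset.range k, (1 - a * q ^ j) = 1 - a ^ k := by
    intro a
    have h := X_pow_sub_C_eq_prod hprim hk (rfl : a ^ k = a ^ k)
    have h2 := congrArg (Polynomial.eval 1) h
    simp only [Polynomial.eval_sub, Polynomial.eval_pow, Polynomial.eval_X,
      Polynomial.eval_C, Polynomial.eval_prod, Polynomial.eval_mul, one_pow] at h2
    rw [show (∏ j ∈ Finset.range k, (1 - a * q ^ j))
        = ∏ j ∈ Finset.range k, (1 - q ^ j * a) from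
      Finset.prod_congr rfl fun j _ => by ring]
    exact h2.symm
  have hP : ∀ n : ℕ, qPoch x q (n + k) = 2 * qPoch x q n := by
    intro n
    rw [qPoch, Finset.prod_range_add]
    have h2 : (∏ j ∈ Finset.range k, (1 - x * q ^ (n + j)))
        = ∏ j ∈ Finset.range k, (1 - (x * q ^ n) * q ^ j) := by
      refine Finset.prod_congr rfl fun j _ => ?_
      rw [pow_add]; ring
    rw [h2, hprod]
    have h3 : (x * q ^ n) ^ k = -1 := by
      rw [mul_pow, hxk, ← pow_mul, mul_comm n k, pow_mul, hqk, one_pow, mul_one]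
    rw [h3, qPoch]
    ring
  have hPm : ∀ (m n : ℕ), qPoch x q (n + m * k) = 2 ^ m * qPoch x q n := by
    intro m
    induction m with
    | zero => simp
    | succ m ih =>
      intro n
      have : n + (m + 1) * k = (n + m * k) + k := by ring
      rw [this, hP, ih, pow_succ]
      ring
  set f : ℕ → ℂ := fun n => q ^ (n * (n + 1)) / (qPoch x q (n + 1)) ^ 2 with hfdef
  have hf : ∀ (r m : ℕ), f (r + m * k) = f r * ((1 : ℂ) / 4) ^ m := by
    intro r m
    have he : (r + m * k) * ((r + m * k) + 1)
        = r * (r + 1) + (2 * m * r + m ^ 2 * k + m) * k := by ring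
    have hq1 : q ^ ((r + m * k) * ((r + m * k) + 1)) = q ^ (r * (r + 1)) := by
      have h1 : q ^ ((2 * m * r + m ^ 2 * k + m) * k) = 1 := by
        rw [mul_comm, pow_mul, hqk, one_pow]
      rw [he, pow_add, h1, mul_one]
    have hp1 : qPoch x q ((r + m * k) + 1) = 2 ^ m * qPoch x q (r + 1) := by
      have h5 : (r + m * k) + 1 = (r + 1) + m * k := by ring
      rw [h5, hPm]
    have h4 : ((2 : ℂ) ^ m * qPoch x q (r + 1)) ^ 2
        = (4 : ℂ) ^ m * (qPoch x q (r + 1)) ^ 2 := by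
      rw [mul_pow, ← pow_mul, mul_comm m 2, pow_mul]
      norm_num
    show q ^ ((r + m * k) * ((r + m * k) + 1)) / (qPoch x q ((r + m * k) + 1)) ^ 2 = _
    rw [hq1, hp1, h4, div_eq_mul_inv, mul_inv, div_eq_mul_inv,
      show ((4 : ℂ) ^ m)⁻¹ = ((1 : ℂ) / 4) ^ m by rw [one_div, inv_pow]]
    ring
  -- norms
  have hnorm : ∀ (r m : ℕ), ‖f (r + m * k)‖ = ‖f r‖ * ((1 : ℝ) / 4) ^ m := by
    intro r m
    rw [hf, norm_mul, norm_pow]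
    congr 2
    rw [norm_div, norm_one]
    simp
  have hgeo : Summable fun m : ℕ => ((1 : ℝ) / 4) ^ m :=
    summable_geometric_of_lt_one (by norm_num) (by norm_num)
  have hsum2 : Summable fun p : ℕ × Fin k => ((1 : ℝ) / 4) ^ p.1 * ‖f (p.2 : ℕ)‖ := by
    have hfin2 : Summable fun r : Fin k => ‖f (r : ℕ)‖ := Summable.of_finite
    exact hgeo.mul_of_nonneg hfin2 (fun m => by positivity) (fun r => by positivity)
  have key : ∀ n : ℕ, ‖f n‖ = ((1 : ℝ) / 4) ^ (n / k) * ‖f (n % k)‖ := by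
    intro n
    conv_lhs => rw [show n = n % k + (n / k) * k from (Nat.mod_add_div' n k).symm]
    rw [hnorm]; ring
  have hsummable : Summable fun n : ℕ => ‖f n‖ := by
    have := ((Nat.divModEquiv k).summable_iff
      (f := fun p : ℕ × Fin k => ((1 : ℝ) / 4) ^ p.1 * ‖f (p.2 : ℕ)‖)).mpr hsum2
    refine this.congr fun n => ?_
    exact (key n).symm
  refine ⟨hsummable, ?_⟩
  -- now the sum
  have hsumf : Summable f := by
    have := hsummable.of_norm
    exact this
  have hg3 : g₃ x q = ∑' n, f n := by
    rw [g₃]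
    refine tsum_congr fun n => ?_
    rw [hqx, ← sq]
  have hequiv : ∑' n, f n = ∑' p : ℕ × Fin k, f ((Nat.divModEquiv k).symm p) :=
    ((Nat.divModEquiv k).symm.tsum_eq f).symm
  have hfp : ∀ p : ℕ × Fin k, f ((Nat.divModEquiv k).symm p)
      = f (p.2 : ℕ) * ((1 : ℂ) / 4) ^ p.1 := by
    intro p
    show f (p.1 * k + (p.2 : ℕ)) = _
    rw [add_comm, hf]
  have hsump : Summable fun p : ℕ × Fin k => f ((Nat.divModEquiv k).symm p) :=
    ((Nat.divModEquiv k).symm.summable_iff).mpr hsumf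
  have hres : ∑' p : ℕ × Fin k, f ((Nat.divModEquiv k).symm p)
      = (∑' m : ℕ, ((1 : ℂ) / 4) ^ m) * ∑ r : Fin k, f (r : ℕ) := by
    rw [Summable.tsum_prod' hsump (fun m => Summable.of_finite)]
    have : ∀ m : ℕ, ∑' r : Fin k, f ((Nat.divModEquiv k).symm (m, r))
        = ((1 : ℂ) / 4) ^ m * ∑ r : Fin k, f (r : ℕ) := by
      intro m
      rw [tsum_fintype]
      rw [Finset.mul_sum]
      refine Finset.sum_congr rfl fun r _ => ?_
      rw [hfp]; ring
    rw [tsum_congr this, tsum_mul_right]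
  have hgeoC : ∑' m : ℕ, ((1 : ℂ) / 4) ^ m = 4 / 3 := by
    rw [tsum_geometric_of_norm_lt_one (by simp; norm_num)]
    norm_num
  have hfin : ∑ r : Fin k, f (r : ℕ)
      = ∑ j ∈ Finset.Icc 1 k, q ^ (j * (j - 1)) / (qPoch x q j) ^ 2 := by
    rw [Fin.sum_univ_eq_sum_range (fun r => f r)]
    rw [← Finset.Ico_add_one_right_eq_Icc, Finset.sum_Ico_eq_sum_range]
    refine Finset.sum_congr (by norm_num) fun i _ => ?_
    simp only [hfdef]
    rw [show 1 + i - 1 = i by omega, show (1 + i) * i = i * (i + 1) by ring,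
      show 1 + i = i + 1 by ring]
  rw [hg3, hequiv, hres, hgeoC, hfin]
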